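/- arXiv:1511.06005 — 2 statements merged into one kernel-verified Lean document; each statement's English description precedes it below -/
import Mathlib

section
/- The power series ∑_{n≥0} z^{2ⁿ} has radius of convergence 1 and its sum f(z) does not extend holomorphically past any point of the unit circle: for every z₀ with |z₀| = 1 and every open neighborhood U of z₀, there is no holomorphic g on U agreeing with f on U ∩ {|z| < 1}. -/
open Metric Set Filter Finset Complex

lemma lac_summable {z : ℂ} (hz : ‖z‖ < 1) : Summable (fun n : ℕ => z ^ (2 ^ n)) := by
  have h0 : (0:ℝ) ≤ ‖z‖ := norm_nonneg z
  have hg : Summable (fun n : ℕ => ‖z‖ ^ n) := summable_geometric_of_lt_one h0 hz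
  have hle : ∀ n : ℕ, ‖z ^ (2^n)‖ ≤ ‖z‖ ^ n := by
    intro n
    rw [norm_pow]
    exact pow_le_pow_of_le_one h0 hz.le (Nat.lt_two_pow_self (n := n)).le
  exact Summable.of_norm (hg.of_nonneg_of_le (fun n => norm_nonneg _) hle)

lemma lac_blowup (ζ : ℂ) (m : ℕ) (hζ : ζ ^ (2^m) = 1) (B c : ℝ) (hc : c < 1) :
    ∃ r : ℝ, c < r ∧ 0 < r ∧ r < 1 ∧ B < ‖∑' n : ℕ, ((r:ℂ) * ζ) ^ (2 ^ n)‖ := by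
  -- ‖ζ‖ = 1
  have hζ1 : ‖ζ‖ = 1 := by
    have h := congrArg norm hζ
    rw [norm_pow, norm_one] at h
    rcases lt_trichotomy ‖ζ‖ 1 with h1 | h1 | h1
    · have := pow_lt_one₀ (norm_nonneg ζ) h1 (Nat.two_pow_pos m).ne'
      linarith
    · exact h1
    · have := one_lt_pow₀ h1 (Nat.two_pow_pos m).ne'
      linarith
  set N : ℕ := ⌈2*|B|⌉₊ + 2*m + 3 with hN
  have hNge : 2*|B| + 2*(m:ℝ) + 3 ≤ (N:ℝ) := by
    have := Nat.le_ceil (2*|B|)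
    push_cast [hN]
    linarith
  set K : ℕ := 2^(N+m) with hK
  -- find r
  have hmem : Ioo (max c (1/2)) 1 ∈ nhdsWithin (1:ℝ) (Iio 1) :=
    Ioo_mem_nhdsLT_of_mem ⟨max_lt hc (by norm_num), le_refl 1⟩
  have htd : Tendsto (fun r : ℝ => r ^ K) (nhdsWithin 1 (Iio 1)) (nhds 1) := by
    have h := ((continuous_pow K).tendsto (1:ℝ)).mono_left
      (nhdsWithin_le_nhds (s := Set.Iio 1))
    simpa using h
  have hev2 : ∀ᶠ r in nhdsWithin (1:ℝ) (Iio 1), 1/2 < r ^ K :=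
    htd.eventually (eventually_gt_nhds (by norm_num))
  obtain ⟨r, hrIoo, hrK⟩ := ((eventually_mem_set.mpr hmem).and hev2).exists
  obtain ⟨hrlt, hr1⟩ := hrIoo
  have hrc : c < r := lt_of_le_of_lt (le_max_left _ _) hrlt
  have hrhalf : (1/2:ℝ) < r := lt_of_le_of_lt (le_max_right _ _) hrlt
  have hr0 : (0:ℝ) < r := by linarith
  refine ⟨r, hrc, hr0, hr1, ?_⟩
  set w : ℂ := (r:ℂ) * ζ with hw
  have hwn : ‖w‖ = r := by
    rw [hw, norm_mul, hζ1, mul_one, Complex.norm_real, Real.norm_eq_abs, _root_.abs_of_pos hr0]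
  have hsum : Summable (fun n : ℕ => w ^ (2^n)) := lac_summable (by rw [hwn]; exact hr1)
  have htail_eq : ∀ i : ℕ, w ^ (2^(i+m)) = ((r ^ (2^(i+m)) : ℝ) : ℂ) := by
    intro i
    have hz1 : ζ ^ (2^(i+m)) = 1 := by
      rw [pow_add, pow_mul', hζ, one_pow]
    rw [hw, mul_pow, hz1, mul_one, Complex.ofReal_pow]
  set S : ℝ := ∑' i : ℕ, r ^ (2^(i+m)) with hS
  have hSsum : Summable (fun i : ℕ => r ^ (2^(i+m))) :=
    (summable_geometric_of_lt_one hr0.le hr1).of_nonneg_of_le (fun i => by positivity)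
      (fun i => pow_le_pow_of_le_one hr0.le hr1.le (le_trans (Nat.lt_two_pow_self (n := i)).le
        (pow_le_pow_right₀ one_le_two (Nat.le_add_right i m))))
  have htail : (∑' i : ℕ, w ^ (2^(i+m))) = ((S:ℝ) : ℂ) := by
    rw [hS, Complex.ofReal_tsum]
    exact tsum_congr htail_eq
  have hsplit := Summable.sum_add_tsum_nat_add (f := fun n : ℕ => w ^ (2^n)) m hsum
  -- lower bound on S
  have hSlb : (N:ℝ) * r ^ K ≤ S := by
    have h1 : ∑ i ∈ range N, r ^ K ≤ ∑ i ∈ range N, r ^ (2^(i+m)) := by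
      apply Finset.sum_le_sum
      intro i hi
      exact pow_le_pow_of_le_one hr0.le hr1.le
        (pow_le_pow_right₀ one_le_two (add_le_add_left (mem_range.mp hi).le m))
    have h2 : ∑ i ∈ range N, r ^ (2^(i+m)) ≤ S :=
      Summable.sum_le_tsum (range N) (fun i _ => by positivity) hSsum
    rw [Finset.sum_const, card_range, nsmul_eq_mul] at h1
    linarith
  have hS0 : 0 ≤ S := tsum_nonneg (fun i => by positivity)
  have hSB : B + m < S := by
    have h1 : (N:ℝ) * (1/2) ≤ (N:ℝ) * r ^ K :=
      mul_le_mul_of_nonneg_left hrK.le (Nat.cast_nonneg N)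
    have h2 : B ≤ |B| := le_abs_self B
    nlinarith
  -- head bound
  have hhead : ‖∑ i ∈ range m, w ^ (2^i)‖ ≤ (m:ℝ) := by
    calc ‖∑ i ∈ range m, w ^ (2^i)‖ ≤ ∑ i ∈ range m, ‖w ^ (2^i)‖ := norm_sum_le _ _
      _ ≤ ∑ i ∈ range m, 1 := by
          apply Finset.sum_le_sum
          intro i _
          rw [norm_pow, hwn]
          exact pow_le_one₀ hr0.le hr1.le
      _ = m := by simp
  -- final
  have hsplit' : (∑ i ∈ range m, w ^ (2^i)) + ((S:ℝ):ℂ) = ∑' n : ℕ, w ^ (2^n) := by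
    rw [← htail]; exact hsplit
  have hfin : ‖∑' n : ℕ, w ^ (2^n)‖ ≥ S - m := by
    rw [← hsplit']
    have h1 : ‖((S:ℝ):ℂ)‖ = S := by
      rw [Complex.norm_real, Real.norm_eq_abs, _root_.abs_of_nonneg hS0]
    have h2 : ‖((S:ℝ):ℂ)‖ ≤ ‖(∑ i ∈ range m, w ^ (2^i)) + ((S:ℝ):ℂ)‖
        + ‖∑ i ∈ range m, w ^ (2^i)‖ := by
      have h3 := norm_sub_le ((∑ i ∈ range m, w ^ (2^i)) + ((S:ℝ):ℂ))
        (∑ i ∈ range m, w ^ (2^i))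
      rw [add_sub_cancel_left] at h3
      exact h3
    rw [h1] at h2
    linarith
  calc B < S - m := by linarith
    _ ≤ ‖∑' n : ℕ, w ^ (2^n)‖ := hfin

lemma root_near (z₀ : ℂ) (h : ‖z₀‖ = 1) {ε : ℝ} (hε : 0 < ε) :
    ∃ ζ : ℂ, ∃ m : ℕ, ζ ^ (2^m) = 1 ∧ ‖ζ - z₀‖ < ε := by
  set θ : ℝ := z₀.arg with hθ
  have hz₀ : Complex.exp (↑θ * I) = z₀ := by
    have := Complex.norm_mul_exp_arg_mul_I z₀
    rwa [show ‖z₀‖ = 1 from h, Complex.ofReal_one, one_mul] at this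
  set δ : ℝ := min (ε/2) 1 with hδ
  have hδ0 : 0 < δ := lt_min (by linarith) one_pos
  obtain ⟨m, hm⟩ := pow_unbounded_of_one_lt (2*Real.pi/δ) (one_lt_two : (1:ℝ) < 2)
  have h2m : (0:ℝ) < 2^m := by positivity
  have hπ : (0:ℝ) < Real.pi := Real.pi_pos
  have hlt : 2*Real.pi/(2^m : ℝ) < δ := by
    rw [div_lt_iff₀ h2m]
    rw [div_lt_iff₀ hδ0] at hm
    linarith [mul_comm δ ((2:ℝ)^m)]
  set k : ℤ := ⌊θ * 2^m / (2*Real.pi)⌋ with hk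
  set α : ℝ := 2*Real.pi*k/2^m with hα
  have hπδ : 2*Real.pi < δ * 2^m := by
    rw [div_lt_iff₀ h2m] at hlt
    linarith
  have key1 : (k:ℝ) * (2*Real.pi) ≤ θ * 2^m :=
    (le_div_iff₀ (by positivity : (0:ℝ) < 2*Real.pi)).mp (Int.floor_le _)
  have key2 : θ * 2^m < ((k:ℝ)+1) * (2*Real.pi) :=
    (div_lt_iff₀ (by positivity : (0:ℝ) < 2*Real.pi)).mp (Int.lt_floor_add_one _)
  have hsub : α - θ = (2*Real.pi*k - θ*2^m)/2^m := by
    rw [hα]; field_simp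
  have hdist : |α - θ| < δ := by
    rw [hsub, abs_div, abs_of_pos h2m, div_lt_iff₀ h2m, abs_lt]
    constructor <;> nlinarith
  refine ⟨Complex.exp (↑α * I), m, ?_, ?_⟩
  · rw [← Complex.exp_nat_mul]
    rw [show ((2^m : ℕ):ℂ) * (↑α * I) = (k:ℂ) * (2*↑Real.pi*I) by
      rw [hα]; push_cast; field_simp]
    exact Complex.exp_int_mul_two_pi_mul_I k
  · have hfac : Complex.exp (↑α * I) - z₀ = Complex.exp (↑θ * I) * (Complex.exp (↑(α-θ) * I) - 1) := by
      rw [mul_sub, mul_one, ← Complex.exp_add, hz₀]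
      congr 2
      push_cast
      ring
    rw [hfac, norm_mul]
    have h1 : ‖Complex.exp (↑θ * I)‖ = 1 := Complex.norm_exp_ofReal_mul_I θ
    rw [h1, one_mul]
    have habs : ‖(↑(α-θ) : ℂ) * I‖ = |α - θ| := by
      rw [norm_mul, Complex.norm_I, mul_one, Complex.norm_real, Real.norm_eq_abs]
    have h2 : ‖Complex.exp (↑(α-θ) * I) - 1‖ ≤ 2 * ‖(↑(α-θ) : ℂ) * I‖ := by
      apply Complex.norm_exp_sub_one_le
      rw [habs]
      exact le_trans hdist.le (min_le_right _ _)
    rw [habs] at h2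
    have : |α - θ| < ε/2 := lt_of_lt_of_le hdist (min_le_left _ _)
    calc ‖Complex.exp (↑(α-θ) * I) - 1‖ ≤ 2 * |α - θ| := h2
      _ < ε := by linarith

lemma lac_not_summable {z : ℂ} (hz : 1 < ‖z‖) : ¬ Summable (fun n : ℕ => z ^ (2 ^ n)) := by
  intro h
  have h0 := (h.tendsto_atTop_zero).norm
  rw [norm_zero] at h0
  have h1 : ∀ n : ℕ, (1:ℝ) ≤ ‖z ^ (2^n)‖ := by
    intro n; rw [norm_pow]; exact one_le_pow₀ hz.le
  have := ge_of_tendsto h0 (Filter.Eventually.of_forall h1)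
  linarith

/-- The lacunary series `∑ z^(2ⁿ)` has radius of convergence 1 and the unit
circle is a natural boundary for its sum. -/
theorem lacunary_series_natural_boundary
    (f : ℂ → ℂ) (hf : ∀ z : ℂ, f z = ∑' n : ℕ, z ^ (2 ^ n)) :
    (∀ z : ℂ, ‖z‖ < 1 → Summable (fun n : ℕ => z ^ (2 ^ n))) ∧
    (∀ z : ℂ, 1 < ‖z‖ → ¬ Summable (fun n : ℕ => z ^ (2 ^ n))) ∧
    ∀ z₀ : ℂ, ‖z₀‖ = 1 →
      ∀ U : Set ℂ, IsOpen U → z₀ ∈ U →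
        ¬ ∃ g : ℂ → ℂ, DifferentiableOn ℂ g U ∧ EqOn f g (U ∩ ball 0 1) := by
  refine ⟨fun z hz => lac_summable hz, fun z hz => lac_not_summable hz, ?_⟩
  rintro z₀ hz₀ U hU hzU ⟨g, hg, heq⟩
  -- find a dyadic root of unity ζ in U
  obtain ⟨ε, hε, hball⟩ := Metric.isOpen_iff.mp hU z₀ hzU
  obtain ⟨ζ, m, hζpow, hζd⟩ := root_near z₀ hz₀ hε
  have hζU : ζ ∈ U := hball (by rwa [mem_ball, dist_eq_norm])
  have hζ1 : ‖ζ‖ = 1 := by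
    have h := congrArg norm hζpow
    rw [norm_pow, norm_one] at h
    rcases lt_trichotomy ‖ζ‖ 1 with h1 | h1 | h1
    · have := pow_lt_one₀ (norm_nonneg ζ) h1 (Nat.two_pow_pos m).ne'
      linarith
    · exact h1
    · have := one_lt_pow₀ h1 (Nat.two_pow_pos m).ne'
      linarith
  -- g is continuous at ζ, hence bounded nearby
  have hgc : ContinuousAt g ζ :=
    (hg.continuousOn.continuousAt (hU.mem_nhds hζU))
  obtain ⟨δ, hδ0, hδ⟩ := Metric.continuousAt_iff.mp hgc 1 one_pos
  obtain ⟨δ₂, hδ₂0, hball₂⟩ := Metric.isOpen_iff.mp hU ζ hζU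
  set δ' : ℝ := min δ δ₂ with hδ'
  have hδ'0 : 0 < δ' := lt_min hδ0 hδ₂0
  set B : ℝ := ‖g ζ‖ + 1 with hB
  have hc : max (1 - δ') 0 < 1 := max_lt (by linarith) one_pos
  obtain ⟨r, hrc, hr0, hr1, hrB⟩ := lac_blowup ζ m hζpow B (max (1 - δ') 0) hc
  set w : ℂ := (r:ℂ) * ζ with hw
  have hwd : ‖w - ζ‖ = 1 - r := by
    have : w - ζ = ((r:ℂ) - 1) * ζ := by rw [hw]; ring
    rw [this, norm_mul, hζ1, mul_one]
    rw [show ((r:ℂ) - 1) = ((r - 1 : ℝ) : ℂ) by push_cast; ring]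
    rw [Complex.norm_real, Real.norm_eq_abs, _root_.abs_of_neg (by linarith)]
    ring
  have hwζ : dist w ζ < δ' := by
    rw [dist_eq_norm, hwd]
    have := lt_of_le_of_lt (le_max_left (1 - δ') 0) hrc
    linarith
  have hwU : w ∈ U := hball₂ (lt_of_lt_of_le hwζ (min_le_right _ _))
  have hwb : w ∈ ball (0:ℂ) 1 := by
    rw [mem_ball, dist_zero_right, hw, norm_mul, hζ1, mul_one,
      Complex.norm_real, Real.norm_eq_abs, _root_.abs_of_pos hr0]
    exact hr1
  have hfg : f w = g w := heq ⟨hwU, hwb⟩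
  have hgw : ‖g w‖ < B := by
    have := hδ (lt_of_lt_of_le hwζ (min_le_left _ _))
    rw [dist_eq_norm] at this
    have h2 := norm_sub_norm_le (g w) (g ζ)
    rw [hB]
    linarith
  rw [← hf w, hfg] at hrB
  exact absurd hrB (not_lt.mpr hgw.le)
end

section
/- For each ν ∈ ℝ, the Bessel function of the first kind J_ν(x) = ∑_{m≥0} (−1)ᵐ / (m! · Γ(m + ν + 1)) · (x/2)^{2m+ν} satisfies the Bessel differential equation x²·J_ν''(x) + x·J_ν'(x) + (x² − ν²)·J_ν(x) = 0 for all x > 0. -/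
open Filter Set

noncomputable def besselCoeff (ν : ℝ) (m : ℕ) : ℝ :=
  (-1 : ℝ) ^ m / (m.factorial * Real.Gamma ((m : ℝ) + ν + 1))

lemma besselCoeff_rec (ν : ℝ) (m : ℕ) :
    ((m : ℝ) + 1) * ((m : ℝ) + ν + 1) * besselCoeff ν (m + 1) = - besselCoeff ν m := by
  unfold besselCoeff
  rcases eq_or_ne ((m : ℝ) + ν + 1) 0 with h | h
  · rw [h, Real.Gamma_zero]
    simp [h]
  · have hΓ : Real.Gamma ((↑(m + 1) : ℝ) + ν + 1)
        = ((m : ℝ) + ν + 1) * Real.Gamma ((m : ℝ) + ν + 1) := by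
      push_cast
      rw [show (m : ℝ) + 1 + ν + 1 = ((m : ℝ) + ν + 1) + 1 by ring, Real.Gamma_add_one h]
    rw [hΓ]
    rcases eq_or_ne (Real.Gamma ((m : ℝ) + ν + 1)) 0 with hg | hg
    · rw [hg]
      simp
    · have hm : (m.factorial : ℝ) ≠ 0 := Nat.cast_ne_zero.2 m.factorial_ne_zero
      rw [Nat.factorial_succ]
      push_cast
      field_simp
      ring

/-- The growth property: the coefficients define an entire power series. -/
def GrowthOK (d : ℕ → ℝ) : Prop := ∀ R : ℝ, 0 < R → Summable fun n => |d n| * R ^ n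

lemma growthOK_besselCoeff (ν : ℝ) : GrowthOK (besselCoeff ν) := by
  intro R hR
  have key : ∀ m : ℕ, |besselCoeff ν m|
      = ((m : ℝ) + 1) * |(m : ℝ) + ν + 1| * |besselCoeff ν (m + 1)| := by
    intro m
    have h2 : |((m : ℝ) + 1) * ((m : ℝ) + ν + 1) * besselCoeff ν (m + 1)|
        = |besselCoeff ν m| := by rw [besselCoeff_rec, abs_neg]
    rw [← h2, abs_mul, abs_mul]
    have h3 : |((m : ℝ) + 1)| = (m : ℝ) + 1 := abs_of_pos (by positivity)
    rw [h3]
  apply summable_of_ratio_norm_eventually_le (r := 1 / 2) (by norm_num)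
  obtain ⟨N, hN⟩ := exists_nat_ge (max (2 * R) (-ν))
  filter_upwards [eventually_ge_atTop N] with n hn
  have hnN : (N : ℝ) ≤ (n : ℝ) := Nat.cast_le.2 hn
  have h2R : 2 * R ≤ (n : ℝ) := le_trans (le_trans (le_max_left _ _) hN) hnN
  have hν : -ν ≤ (n : ℝ) := le_trans (le_trans (le_max_right _ _) hN) hnN
  have hpos : (1 : ℝ) ≤ (n : ℝ) + ν + 1 := by linarith
  have habs : |(n : ℝ) + ν + 1| = (n : ℝ) + ν + 1 := abs_of_pos (by linarith)
  rw [Real.norm_eq_abs, Real.norm_eq_abs, abs_mul, abs_mul, abs_pow, abs_pow,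
    abs_of_pos hR, abs_abs, abs_abs, key n, habs, pow_succ]
  have hRp : (0 : ℝ) ≤ R ^ n := by positivity
  have hstep : |besselCoeff ν (n + 1)| * R ≤ 1 / 2 * (((n : ℝ) + 1) * (((n : ℝ) + ν + 1)
      * |besselCoeff ν (n + 1)|)) := by
    have h1 : 2 * R ≤ ((n : ℝ) + 1) * ((n : ℝ) + ν + 1) := by nlinarith
    nlinarith [abs_nonneg (besselCoeff ν (n + 1))]
  calc |besselCoeff ν (n + 1)| * (R ^ n * R)
      = (|besselCoeff ν (n + 1)| * R) * R ^ n := by ring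
    _ ≤ (1 / 2 * (((n : ℝ) + 1) * (((n : ℝ) + ν + 1) * |besselCoeff ν (n + 1)|))) * R ^ n :=
        mul_le_mul_of_nonneg_right hstep hRp
    _ = 1 / 2 * (((n : ℝ) + 1) * ((n : ℝ) + ν + 1) * |besselCoeff ν (n + 1)| * R ^ n) := by
        ring

lemma cast_le_two_pow (n : ℕ) : ((n : ℝ)) ≤ 2 ^ n := by
  have h := (Nat.lt_two_pow_self (n := n)).le
  exact_mod_cast h

lemma growthOK_shift {d : ℕ → ℝ} (hd : GrowthOK d) :
    GrowthOK (fun n => ((n : ℝ) + 1) * d (n + 1)) := by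
  intro R hR
  have h2R : Summable fun m => |d m| * (2 * R) ^ m := hd (2 * R) (by positivity)
  have h2R' : Summable fun n => |d (n + 1)| * (2 * R) ^ (n + 1) * (1 / R) :=
    ((summable_nat_add_iff 1).2 h2R).mul_right (1 / R)
  apply Summable.of_nonneg_of_le (fun n => by positivity) _ h2R'
  intro n
  have hle : ((n : ℝ) + 1) ≤ 2 ^ (n + 1) := by
    have := cast_le_two_pow (n + 1)
    push_cast at this
    linarith
  have habs : |((n : ℝ) + 1) * d (n + 1)| = ((n : ℝ) + 1) * |d (n + 1)| := by
    rw [abs_mul]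
    congr 1
    exact abs_of_pos (by positivity)
  rw [habs]
  calc ((n : ℝ) + 1) * |d (n + 1)| * R ^ n
      ≤ 2 ^ (n + 1) * |d (n + 1)| * R ^ n :=
        mul_le_mul_of_nonneg_right (mul_le_mul_of_nonneg_right hle (abs_nonneg _))
          (by positivity)
    _ = |d (n + 1)| * (2 * R) ^ (n + 1) * (1 / R) := by
        rw [mul_pow]
        field_simp
        ring

lemma growthOK_mul_n {d : ℕ → ℝ} (hd : GrowthOK d) :
    GrowthOK (fun n => (n : ℝ) * d n) := by
  intro R hR
  have h2R : Summable fun m => |d m| * (2 * R) ^ m := hd (2 * R) (by positivity)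
  apply Summable.of_nonneg_of_le (fun n => by positivity) _ h2R
  intro n
  have hle : ((n : ℝ)) ≤ 2 ^ n := cast_le_two_pow n
  have habs : |(n : ℝ) * d n| = (n : ℝ) * |d n| := by
    rw [abs_mul]
    congr 1
    exact abs_of_nonneg (by positivity)
  rw [habs, mul_pow]
  calc (n : ℝ) * |d n| * R ^ n ≤ 2 ^ n * |d n| * R ^ n :=
        mul_le_mul_of_nonneg_right (mul_le_mul_of_nonneg_right hle (abs_nonneg _))
          (by positivity)
    _ = |d n| * (2 ^ n * R ^ n) := by ring

lemma summable_of_growthOK {d : ℕ → ℝ} (hd : GrowthOK d) (t : ℝ) :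
    Summable fun n => d n * t ^ n := by
  apply Summable.of_abs
  apply Summable.of_nonneg_of_le (fun n => abs_nonneg _) _ (hd (|t| + 1) (by positivity))
  intro n
  rw [abs_mul, abs_pow]
  exact mul_le_mul_of_nonneg_left
    (pow_le_pow_left₀ (abs_nonneg _) (by linarith) n) (abs_nonneg _)

lemma hasDerivAt_tsum_pow {d : ℕ → ℝ} (hd : GrowthOK d) (x : ℝ) :
    HasDerivAt (fun y : ℝ => ∑' n, d n * y ^ n)
      (∑' n : ℕ, ((n : ℝ) + 1) * d (n + 1) * x ^ n) x := by
  set R : ℝ := |x| + 1 with hR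
  have hR1 : (1 : ℝ) ≤ R := by rw [hR]; linarith [abs_nonneg x]
  have hR0 : (0 : ℝ) < R := by linarith
  set u : ℕ → ℝ := fun n => (n : ℝ) * |d n| * R ^ (n - 1) with hu
  have hu_sum : Summable u := by
    rw [← summable_nat_add_iff 1]
    apply ((growthOK_shift hd) R hR0).congr
    intro n
    simp only [hu]
    have h4 : |((n : ℝ) + 1) * d (n + 1)| = ((n : ℝ) + 1) * |d (n + 1)| := by
      rw [abs_mul]
      congr 1
      exact abs_of_pos (by positivity)
    rw [h4]
    push_cast
    ring
  have hmem : x ∈ Ioo (-R) R := by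
    constructor
    · have := neg_abs_le x; simp only [hR]; linarith
    · have := le_abs_self x; simp only [hR]; linarith
  have hbound : ∀ (n : ℕ), ∀ y ∈ Ioo (-R) R, ‖d n * ((n : ℝ) * y ^ (n - 1))‖ ≤ u n := by
    intro n y hy
    rw [Real.norm_eq_abs, abs_mul, abs_mul, abs_pow]
    have hyR : |y| ≤ R := by
      rw [abs_le]; exact ⟨hy.1.le, hy.2.le⟩
    have h1 : |y| ^ (n - 1) ≤ R ^ (n - 1) := pow_le_pow_left₀ (abs_nonneg _) hyR _
    have hnn : |(n : ℝ)| = (n : ℝ) := abs_of_nonneg (by positivity)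
    rw [hnn]
    simp only [hu]
    calc |d n| * ((n : ℝ) * |y| ^ (n - 1)) ≤ |d n| * ((n : ℝ) * R ^ (n - 1)) := by
          apply mul_le_mul_of_nonneg_left _ (abs_nonneg _)
          exact mul_le_mul_of_nonneg_left h1 (by positivity)
      _ = (n : ℝ) * |d n| * R ^ (n - 1) := by ring
  have hsummable0 : Summable fun n => d n * (0 : ℝ) ^ n := by
    apply summable_of_ne_finset_zero (s := {0})
    intro n hn
    have hn0 : n ≠ 0 := by simpa using hn
    simp [zero_pow hn0]
  have key : HasDerivAt (fun y : ℝ => ∑' n, d n * y ^ n)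
      (∑' n : ℕ, d n * ((n : ℝ) * x ^ (n - 1))) x :=
    hasDerivAt_tsum_of_isPreconnected hu_sum isOpen_Ioo isPreconnected_Ioo
      (fun n y _ => (hasDerivAt_pow n y).const_mul (d n)) hbound
      (Set.mem_Ioo.2 ⟨by linarith, hR0⟩) hsummable0 hmem
  have hsummable : Summable fun n => d n * ((n : ℝ) * x ^ (n - 1)) := by
    apply Summable.of_abs
    apply Summable.of_nonneg_of_le (fun n => abs_nonneg _) _ hu_sum
    intro n
    rw [abs_mul, abs_mul, abs_pow]
    have hxR : |x| ≤ R := by rw [hR]; linarith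
    have h1 : |x| ^ (n - 1) ≤ R ^ (n - 1) := pow_le_pow_left₀ (abs_nonneg _) hxR _
    have hnn : |(n : ℝ)| = (n : ℝ) := abs_of_nonneg (by positivity)
    rw [hnn]
    simp only [hu]
    calc |d n| * ((n : ℝ) * |x| ^ (n - 1)) ≤ |d n| * ((n : ℝ) * R ^ (n - 1)) := by
          apply mul_le_mul_of_nonneg_left _ (abs_nonneg _)
          exact mul_le_mul_of_nonneg_left h1 (by positivity)
      _ = (n : ℝ) * |d n| * R ^ (n - 1) := by ring
  have hsum_eq : (∑' n : ℕ, d n * ((n : ℝ) * x ^ (n - 1)))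
      = ∑' n : ℕ, ((n : ℝ) + 1) * d (n + 1) * x ^ n := by
    rw [Summable.tsum_eq_zero_add hsummable]
    simp only [Nat.cast_zero, zero_mul, mul_zero, zero_add]
    apply tsum_congr
    intro n
    push_cast
    ring
  rw [← hsum_eq]
  exact key

noncomputable def psum (d : ℕ → ℝ) : ℝ → ℝ := fun t => ∑' n : ℕ, d n * t ^ n

noncomputable def shiftc (d : ℕ → ℝ) : ℕ → ℝ := fun n => ((n : ℝ) + 1) * d (n + 1)

lemma growthOK_shiftc {d : ℕ → ℝ} (hd : GrowthOK d) : GrowthOK (shiftc d) :=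
  growthOK_shift hd

lemma hasDerivAt_psum {d : ℕ → ℝ} (hd : GrowthOK d) (t : ℝ) :
    HasDerivAt (psum d) (psum (shiftc d) t) t := by
  have h := hasDerivAt_tsum_pow hd t
  exact h

lemma bessel_combo (ν t : ℝ) :
    t * psum (shiftc (shiftc (besselCoeff ν))) t
      + (ν + 1) * psum (shiftc (besselCoeff ν)) t
      + psum (besselCoeff ν) t = 0 := by
  have hgc := growthOK_besselCoeff ν
  have hg1 := growthOK_shiftc hgc
  have hsum_h : Summable (fun n : ℕ => (n : ℝ) * shiftc (besselCoeff ν) n * t ^ n) :=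
    summable_of_growthOK (growthOK_mul_n hg1) t
  have S2 : Summable (fun n : ℕ => (ν + 1) * (shiftc (besselCoeff ν) n * t ^ n)) :=
    (summable_of_growthOK hg1 t).mul_left _
  have S3 : Summable (fun n : ℕ => besselCoeff ν n * t ^ n) := summable_of_growthOK hgc t
  have h1 : t * psum (shiftc (shiftc (besselCoeff ν))) t
      = ∑' n : ℕ, (n : ℝ) * shiftc (besselCoeff ν) n * t ^ n := by
    simp only [psum]
    rw [← tsum_mul_left, Summable.tsum_eq_zero_add hsum_h]
    simp only [Nat.cast_zero, zero_mul, zero_add]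
    apply tsum_congr
    intro n
    simp only [shiftc]
    push_cast
    ring
  have h2 : (ν + 1) * psum (shiftc (besselCoeff ν)) t
      = ∑' n : ℕ, (ν + 1) * (shiftc (besselCoeff ν) n * t ^ n) := by
    simp only [psum]
    rw [← tsum_mul_left]
  rw [h1, h2]
  simp only [psum]
  rw [← Summable.tsum_add hsum_h S2, ← Summable.tsum_add (hsum_h.add S2) S3]
  have hterm : ∀ n : ℕ, ((n : ℝ) * shiftc (besselCoeff ν) n * t ^ n
      + (ν + 1) * (shiftc (besselCoeff ν) n * t ^ n)) + besselCoeff ν n * t ^ n = 0 := by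
    intro n
    have hrec := besselCoeff_rec ν n
    simp only [shiftc]
    linear_combination (t ^ n) * hrec
  rw [tsum_congr hterm]
  exact tsum_zero

/-- The Bessel function of the first kind, defined by its power series,
satisfies Bessel's differential equation
`x² J'' + x J' + (x² − ν²) J = 0` for all `x > 0`. -/
theorem bessel_function_satisfies_bessel_ode
    (ν : ℝ) (J : ℝ → ℝ)
    (hJ : ∀ x : ℝ, J x = ∑' m : ℕ,
      ((-1 : ℝ) ^ m / (m.factorial * Real.Gamma ((m : ℝ) + ν + 1))) *
        (x / 2) ^ (2 * (m : ℝ) + ν)) :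
    ∀ x : ℝ, 0 < x →
      x ^ 2 * deriv (deriv J) x + x * deriv J x + (x ^ 2 - ν ^ 2) * J x = 0 := by
  have hgc := growthOK_besselCoeff ν
  have hg1 := growthOK_shiftc hgc
  -- J equals the nice closed form on (0, ∞)
  have hJK : ∀ y ∈ Ioi (0 : ℝ), J y = (y / 2) ^ ν * psum (besselCoeff ν) (y ^ 2 / 4) := by
    intro y hy
    have hy0 : (0 : ℝ) < y := hy
    have hy2 : (0 : ℝ) < y / 2 := by linarith
    rw [hJ y]
    have hterm : ∀ m : ℕ,
        ((-1 : ℝ) ^ m / (m.factorial * Real.Gamma ((m : ℝ) + ν + 1))) *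
          (y / 2) ^ (2 * (m : ℝ) + ν)
        = (y / 2) ^ ν * (besselCoeff ν m * (y ^ 2 / 4) ^ m) := by
      intro m
      rw [show (2 * (m : ℝ) + ν) = ((2 * m : ℕ) : ℝ) + ν by push_cast; ring,
        Real.rpow_add hy2, Real.rpow_natCast, pow_mul,
        show (y / 2) ^ 2 = y ^ 2 / 4 by ring]
      unfold besselCoeff
      ring
    rw [tsum_congr hterm, tsum_mul_left]
    rfl
  intro x hx
  have hx2 : (0 : ℝ) < x / 2 := by linarith
  -- derivative computations for the closed form
  have hhalf : ∀ y : ℝ, HasDerivAt (fun z : ℝ => z / 2) (1 / 2) y := by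
    intro y
    simpa using (hasDerivAt_id y).div_const 2
  have hq : ∀ y : ℝ, HasDerivAt (fun z : ℝ => z ^ 2 / 4) (y / 2) y := by
    intro y
    have h := (hasDerivAt_pow 2 y).div_const 4
    exact h.congr_deriv (by ring)
  have hrp : ∀ (p : ℝ) (y : ℝ), 0 < y →
      HasDerivAt (fun z : ℝ => (z / 2) ^ p) (p * (y / 2) ^ (p - 1) * (1 / 2)) y := by
    intro p y hy
    have hy2 : (0 : ℝ) < y / 2 := by linarith
    exact (Real.hasDerivAt_rpow_const (Or.inl hy2.ne')).comp y (hhalf y)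
  have hfq : ∀ (d : ℕ → ℝ) (_ : GrowthOK d) (y : ℝ),
      HasDerivAt (fun z : ℝ => psum d (z ^ 2 / 4)) (psum (shiftc d) (y ^ 2 / 4) * (y / 2)) y := by
    intro d hd y
    exact (hasDerivAt_psum hd (y ^ 2 / 4)).comp y (hq y)
  -- first derivative
  have hK' : ∀ y ∈ Ioi (0 : ℝ),
      HasDerivAt (fun z : ℝ => (z / 2) ^ ν * psum (besselCoeff ν) (z ^ 2 / 4))
        (ν * (y / 2) ^ (ν - 1) * (1 / 2) * psum (besselCoeff ν) (y ^ 2 / 4)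
          + (y / 2) ^ ν * (psum (shiftc (besselCoeff ν)) (y ^ 2 / 4) * (y / 2))) y := by
    intro y hy
    exact (hrp ν y hy).mul (hfq _ hgc y)
  have hderivJ : ∀ y ∈ Ioi (0 : ℝ),
      deriv J y = ν * (y / 2) ^ (ν - 1) * (1 / 2) * psum (besselCoeff ν) (y ^ 2 / 4)
          + (y / 2) ^ ν * (psum (shiftc (besselCoeff ν)) (y ^ 2 / 4) * (y / 2)) := by
    intro y hy
    have hEq : J =ᶠ[nhds y] fun z => (z / 2) ^ ν * psum (besselCoeff ν) (z ^ 2 / 4) := by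
      filter_upwards [isOpen_Ioi.mem_nhds hy] with z hz using hJK z hz
    rw [hEq.deriv_eq]
    exact (hK' y hy).deriv
  -- second derivative
  have hA : HasDerivAt
      (fun z : ℝ => ν * (z / 2) ^ (ν - 1) * (1 / 2) * psum (besselCoeff ν) (z ^ 2 / 4))
      ((ν * ((ν - 1) * (x / 2) ^ (ν - 1 - 1) * (1 / 2)) * (1 / 2))
          * psum (besselCoeff ν) (x ^ 2 / 4)
        + ν * (x / 2) ^ (ν - 1) * (1 / 2)
          * (psum (shiftc (besselCoeff ν)) (x ^ 2 / 4) * (x / 2))) x :=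
    (((hrp (ν - 1) x hx).const_mul ν).mul_const (1 / 2)).mul (hfq _ hgc x)
  have hB : HasDerivAt
      (fun z : ℝ => (z / 2) ^ ν * (psum (shiftc (besselCoeff ν)) (z ^ 2 / 4) * (z / 2)))
      (ν * (x / 2) ^ (ν - 1) * (1 / 2)
          * (psum (shiftc (besselCoeff ν)) (x ^ 2 / 4) * (x / 2))
        + (x / 2) ^ ν * (psum (shiftc (shiftc (besselCoeff ν))) (x ^ 2 / 4) * (x / 2) * (x / 2)
            + psum (shiftc (besselCoeff ν)) (x ^ 2 / 4) * (1 / 2))) x :=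
    (hrp ν x hx).mul ((hfq _ hg1 x).mul (hhalf x))
  have hderiv2 : deriv (deriv J) x
      = (ν * ((ν - 1) * (x / 2) ^ (ν - 1 - 1) * (1 / 2)) * (1 / 2))
          * psum (besselCoeff ν) (x ^ 2 / 4)
        + ν * (x / 2) ^ (ν - 1) * (1 / 2)
          * (psum (shiftc (besselCoeff ν)) (x ^ 2 / 4) * (x / 2))
        + (ν * (x / 2) ^ (ν - 1) * (1 / 2)
            * (psum (shiftc (besselCoeff ν)) (x ^ 2 / 4) * (x / 2))
          + (x / 2) ^ ν * (psum (shiftc (shiftc (besselCoeff ν))) (x ^ 2 / 4) * (x / 2) * (x / 2)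
              + psum (shiftc (besselCoeff ν)) (x ^ 2 / 4) * (1 / 2))) := by
    have hEq2 : deriv J =ᶠ[nhds x]
        fun z => ν * (z / 2) ^ (ν - 1) * (1 / 2) * psum (besselCoeff ν) (z ^ 2 / 4)
          + (z / 2) ^ ν * (psum (shiftc (besselCoeff ν)) (z ^ 2 / 4) * (z / 2)) := by
      filter_upwards [isOpen_Ioi.mem_nhds hx] with z hz using hderivJ z hz
    rw [hEq2.deriv_eq]
    exact (hA.add hB).deriv
  -- final algebra
  rw [hderiv2, hderivJ x hx, hJK x hx]
  set E : ℝ := (x / 2) ^ (ν - 2) with hE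
  have e1 : (x / 2) ^ ν = E * (x / 2) ^ (2 : ℕ) := by
    rw [hE, ← Real.rpow_natCast (x / 2) 2, ← Real.rpow_add hx2]
    congr 1
    push_cast
    ring
  have e2 : (x / 2) ^ (ν - 1) = E * (x / 2) := by
    have h := Real.rpow_add hx2 (ν - 2) 1
    rw [Real.rpow_one] at h
    rw [hE, show ν - 1 = ν - 2 + 1 by ring, h]
  have e3 : (x / 2) ^ (ν - 1 - 1) = E := by
    rw [hE]
    congr 1
    ring
  rw [e1, e2, e3]
  have hcombo := bessel_combo ν (x ^ 2 / 4)
  linear_combination (E * x ^ 4 / 4) * hcombo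
end
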